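/- Let a, b, c, d, p, q, r be positive real numbers with q > p·r and y* := q/p − r ≤ ((1+a)/2)². Define x* := (1−a)/2 + √(((1+a)/2)² − y*) and z* := (c·x*/(a+x*) − b)·(y* + d). Then the point (x*, y*, z*) is an equilibrium of the rescaled food chain system, i.e., x*(1−x*) − x*·y*/(x*+a) = 0, c·x*·y*/(x*+a) − b·y* − y*·z*/(y*+d) = 0, and p·(z*)² − q·(z*)²/(y*+r) = 0. -/
import Mathlib

/-- The point `(x*, y*, z*)` given by the equilibrium relations is an equilibrium of the
rescaled Leslie–Gower tritrophic food chain system. -/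
theorem interior_point_is_equilibrium
    (a b c d p q r : ℝ)
    (ha : 0 < a) (hb : 0 < b) (hc : 0 < c) (hd : 0 < d)
    (hp : 0 < p) (hq : 0 < q) (hr : 0 < r)
    (hqpr : q > p * r)
    (ystar : ℝ) (hy : ystar = q / p - r)
    (hyle : ystar ≤ ((1 + a) / 2) ^ 2)
    (xstar : ℝ) (hx : xstar = (1 - a) / 2 + Real.sqrt (((1 + a) / 2) ^ 2 - ystar))
    (zstar : ℝ) (hz : zstar = (c * xstar / (a + xstar) - b) * (ystar + d)) :
    xstar * (1 - xstar) - xstar * ystar / (xstar + a) = 0 ∧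
    c * xstar * ystar / (xstar + a) - b * ystar - ystar * zstar / (ystar + d) = 0 ∧
    p * zstar ^ 2 - q * zstar ^ 2 / (ystar + r) = 0 := by
  have hs : Real.sqrt (((1 + a) / 2) ^ 2 - ystar) ^ 2 = ((1 + a) / 2) ^ 2 - ystar :=
    Real.sq_sqrt (by linarith)
  have hs0 : 0 ≤ Real.sqrt (((1 + a) / 2) ^ 2 - ystar) := Real.sqrt_nonneg _
  have hxa : 0 < xstar + a := by rw [hx]; nlinarith
  have hy0 : 0 < ystar := by
    have : r < q / p := (lt_div_iff₀ hp).mpr (by linarith)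
    rw [hy]; linarith
  have hyd : 0 < ystar + d := by linarith
  have hyr : ystar + r = q / p := by rw [hy]; ring
  have hkey : (1 - xstar) * (xstar + a) = ystar := by
    rw [hx]; nlinarith [hs]
  refine ⟨?_, ?_, ?_⟩
  · field_simp
    linear_combination xstar * hkey
  · rw [hz]
    have hax : a + xstar ≠ 0 := by rw [add_comm]; exact hxa.ne'
    field_simp
    ring
  · rw [hyr]
    field_simp
    ring
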